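/- Let S be a numerical semigroup with embedding dimension ν(S), and let d be a positive integer. Then the embedding dimension of S/d satisfies ν(S/d) ≤ C(ν(S)+d−1, d), the binomial coefficient counting multisets of size d from ν(S) elements. -/

import Mathlib

def minGens (T : Set ℕ) : Set ℕ :=
  {x | x ∈ T ∧ x ≠ 0 ∧ ∀ a b : ℕ, a ∈ T → b ∈ T → a ≠ 0 → b ≠ 0 → x ≠ a + b}

/-- Every element of a set of naturals is a sum of a multiset of `minGens`-elements. -/
lemma exists_multiset_minGens (T : Set ℕ) : ∀ n, n ∈ T →
    ∃ m : Multiset ℕ, (∀ g ∈ m, g ∈ minGens T) ∧ m.sum = n := by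
  intro n
  induction n using Nat.strong_induction_on with
  | _ n ih =>
    intro hn
    rcases eq_or_ne n 0 with h0 | h0
    · exact ⟨0, by simp, by simp [h0]⟩
    by_cases hmin : n ∈ minGens T
    · exact ⟨{n}, by simpa using hmin, by simp⟩
    · have : ∃ a b : ℕ, a ∈ T ∧ b ∈ T ∧ a ≠ 0 ∧ b ≠ 0 ∧ n = a + b := by
        by_contra hc
        push_neg at hc
        exact hmin ⟨hn, h0, fun a b ha hb ha0 hb0 => hc a b ha hb ha0 hb0⟩
      obtain ⟨a, b, ha, hb, ha0, hb0, hab⟩ := this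
      obtain ⟨ma, hma, hsa⟩ := ih a (by omega) ha
      obtain ⟨mb, hmb, hsb⟩ := ih b (by omega) hb
      refine ⟨ma + mb, ?_, by simp [hsa, hsb, hab.symm]⟩
      intro g hg
      rcases Multiset.mem_add.mp hg with h | h
      · exact hma g h
      · exact hmb g h

lemma davenport_aux (d : ℕ) (hd : 0 < d) (m : Multiset ℕ) (l : List ℕ) (hl : l = m.toList)
    (hcard : d < Multiset.card m) (hlen : l.length = Multiset.card m) (i j : ℕ)
    (hj : j < d + 1) (hlt : i < j)
    (hmod : (l.take i).sum % d = (l.take j).sum % d) :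
    ∃ m' : Multiset ℕ, m' ≤ m ∧ m' ≠ 0 ∧ m' ≠ m ∧ d ∣ m'.sum := by
  set l' := (l.drop i).take (j - i) with hl'
  have hml : (↑l : Multiset ℕ) = m := by rw [hl]; exact Multiset.coe_toList m
  have hsub : l'.Sublist l := (List.take_sublist _ _).trans (List.drop_sublist _ _)
  have hle : (↑l' : Multiset ℕ) ≤ m := by
    rw [← hml]; exact Multiset.coe_le.mpr hsub.subperm
  have hlen' : l'.length = j - i := by
    rw [hl', List.length_take, List.length_drop]
    omega
  have htake : l.take j = l.take i ++ l' := by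
    have := List.take_add (l := l) (i := i) (j := j - i)
    rwa [Nat.add_sub_cancel' (le_of_lt hlt)] at this
  have hsumeq : (l.take j).sum = (l.take i).sum + l'.sum := by
    rw [htake, List.sum_append]
  have hdvd : d ∣ l'.sum := by
    have hmod' : (l.take i).sum ≡ (l.take j).sum [MOD d] := hmod
    have h2 := (Nat.modEq_iff_dvd' (by omega)).mp hmod'
    rwa [hsumeq, Nat.add_sub_cancel_left] at h2
  refine ⟨↑l', hle, ?_, ?_, by simpa using hdvd⟩
  · intro h
    have : l'.length = 0 := by
      have := congrArg Multiset.card h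
      simpa using this
    omega
  · intro h
    have : l'.length = Multiset.card m := by
      have := congrArg Multiset.card h
      simpa using this
    omega

/-- Davenport-type lemma: any multiset of naturals of size > d has a proper nonempty
sub-multiset whose sum is divisible by d. -/
lemma davenport (d : ℕ) (hd : 0 < d) (m : Multiset ℕ) (hcard : d < Multiset.card m) :
    ∃ m' : Multiset ℕ, m' ≤ m ∧ m' ≠ 0 ∧ m' ≠ m ∧ d ∣ m'.sum := by
  set l := m.toList with hl
  have hlen : l.length = Multiset.card m := Multiset.length_toList m
  have hmaps : ∀ i ∈ Finset.range (d + 1), ((l.take i).sum % d) ∈ Finset.range d :=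
    fun i _ => Finset.mem_range.mpr (Nat.mod_lt _ hd)
  obtain ⟨i, hi, j, hj, hij, hmod⟩ :=
    Finset.exists_ne_map_eq_of_card_lt_of_maps_to
      (by simp : (Finset.range d).card < (Finset.range (d+1)).card) hmaps
  simp only [Finset.mem_range] at hi hj
  rcases lt_or_gt_of_ne hij with hlt | hlt
  · exact davenport_aux d hd m l hl hcard hlen i j hj hlt hmod
  · exact davenport_aux d hd m l hl hcard hlen j i hi hlt hmod.symm

lemma sum_ne_zero_of_mem_minGens {G0 : Set ℕ} (hG0 : ∀ g ∈ G0, g ≠ 0)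
    {m : Multiset ℕ} (hm : ∀ g ∈ m, g ∈ G0) (h0 : m ≠ 0) : m.sum ≠ 0 := by
  obtain ⟨g, hg⟩ := Multiset.exists_mem_of_ne_zero h0
  have hgle : g ≤ m.sum := Multiset.single_le_sum (fun _ _ => Nat.zero_le _) g hg
  have := hG0 g (hm g hg)
  omega

/-- Key lemma: an irreducible element of S/d has a factorisation of `d*x`
into at most `d` minimal generators of `S`. -/
lemma key (S : AddSubmonoid ℕ) (d : ℕ) (hd : 0 < d) (x : ℕ)
    (hx : x ∈ minGens {x : ℕ | d * x ∈ S}) :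
    ∃ m : Multiset ℕ, (∀ g ∈ m, g ∈ minGens (S : Set ℕ)) ∧ m ≠ 0 ∧
      Multiset.card m ≤ d ∧ m.sum = d * x := by
  obtain ⟨hxT, hx0, hirr⟩ := hx
  obtain ⟨m, hmG, hms⟩ := exists_multiset_minGens (S : Set ℕ) (d * x) hxT
  have hG0 : ∀ g ∈ minGens (S : Set ℕ), g ≠ 0 := fun g hg => hg.2.1
  have hm0 : m ≠ 0 := by
    intro h; rw [h] at hms; simp at hms; omega
  refine ⟨m, hmG, hm0, ?_, hms⟩
  by_contra hcard
  push_neg at hcard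
  obtain ⟨m', hle, h0', hne', hdvd'⟩ := davenport d hd m hcard
  have hm'G : ∀ g ∈ m', g ∈ minGens (S : Set ℕ) := fun g hg => hmG g (Multiset.mem_of_le hle hg)
  have hrest : m - m' ≤ m := tsub_le_self
  have hrG : ∀ g ∈ m - m', g ∈ minGens (S : Set ℕ) :=
    fun g hg => hmG g (Multiset.mem_of_le hrest hg)
  have hsplit : m'.sum + (m - m').sum = d * x := by
    rw [← Multiset.sum_add, add_comm m' (m - m'), tsub_add_cancel_of_le hle, hms]
  have hr0 : m - m' ≠ 0 := by
    intro h
    have := tsub_add_cancel_of_le hle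
    rw [h, zero_add] at this
    exact hne' this
  have hs1 : m'.sum ∈ S := AddSubmonoid.multiset_sum_mem S m' (fun g hg => (hm'G g hg).1)
  have hs2 : (m - m').sum ∈ S := AddSubmonoid.multiset_sum_mem S _ (fun g hg => (hrG g hg).1)
  have hn1 : m'.sum ≠ 0 := sum_ne_zero_of_mem_minGens hG0 hm'G h0'
  have hn2 : (m - m').sum ≠ 0 := sum_ne_zero_of_mem_minGens hG0 hrG hr0
  have hdvd2 : d ∣ (m - m').sum := by
    have : d ∣ m'.sum + (m - m').sum := hsplit ▸ Dvd.intro x rfl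
    exact (Nat.dvd_add_right hdvd').mp this
  obtain ⟨y, hy⟩ := hdvd'
  obtain ⟨z, hz⟩ := hdvd2
  refine hirr y z ?_ ?_ ?_ ?_ ?_
  · show d * y ∈ S; rwa [← hy]
  · show d * z ∈ S; rwa [← hz]
  · intro h; rw [h, Nat.mul_zero] at hy; exact hn1 hy
  · intro h; rw [h, Nat.mul_zero] at hz; exact hn2 hz
  · have : d * x = d * (y + z) := by rw [Nat.mul_add, ← hy, ← hz, hsplit]
    exact Nat.eq_of_mul_eq_mul_left hd this

lemma multiset_sup_mem (m : Multiset ℕ) (hm : m ≠ 0) : m.sup ∈ m := by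
  induction m using Multiset.induction with
  | empty => simp at hm
  | cons a s ih =>
    rcases eq_or_ne s 0 with hs | hs
    · subst hs; simp
    · rw [Multiset.sup_cons]
      rcases le_total a s.sup with h | h
      · rw [sup_eq_right.mpr h]; exact Multiset.mem_cons_of_mem (ih hs)
      · rw [sup_eq_left.mpr h]; exact Multiset.mem_cons_self a s

/-- If `d*x' = d*x + t*g` with everything appropriate, `x'` can't be irreducible unless t=0. -/
lemma not_irred_of_add (S : AddSubmonoid ℕ) (d x x' t g : ℕ) (hd : 0 < d)
    (hxT : d * x ∈ S) (hx0 : x ≠ 0) (hgS : g ∈ S) (hg0 : g ≠ 0) (ht : t ≠ 0)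
    (heq : d * x' = d * x + t * g)
    (hx' : x' ∈ minGens {x : ℕ | d * x ∈ S}) : False := by
  obtain ⟨hx'T, hx'0, hirr⟩ := hx'
  have htg : 0 < t * g := Nat.pos_of_ne_zero (by positivity)
  have hxx : x < x' := by
    by_contra h
    push_neg at h
    have : d * x' ≤ d * x := Nat.mul_le_mul_left d h
    omega
  set y := x' - x with hy
  have hdy : d * y = t * g := by
    have h1 : d * y + d * x = d * x' := by
      rw [← Nat.mul_add, hy, Nat.sub_add_cancel (le_of_lt hxx)]
    omega
  have hyT : d * y ∈ S := by
    rw [hdy]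
    have : t • g ∈ S := AddSubmonoid.nsmul_mem S hgS t
    rwa [smul_eq_mul] at this
  have hy0 : y ≠ 0 := by omega
  exact hirr x y hxT hyT hx0 hy0 (by omega)

/-- Injectivity core: equal padded multisets force equal elements. -/
lemma inj_core (S : AddSubmonoid ℕ) (d : ℕ) (hd : 0 < d) (x x' : ℕ)
    (hx : x ∈ minGens {x : ℕ | d * x ∈ S}) (hx' : x' ∈ minGens {x : ℕ | d * x ∈ S})
    (m m' : Multiset ℕ)
    (hmG : ∀ g ∈ m, g ∈ minGens (S : Set ℕ)) (hm0 : m ≠ 0) (hms : m.sum = d * x)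
    (hmG' : ∀ g ∈ m', g ∈ minGens (S : Set ℕ)) (hm0' : m' ≠ 0) (hms' : m'.sum = d * x')
    (hcc : m + Multiset.replicate (d - Multiset.card m) m.sup
         = m' + Multiset.replicate (d - Multiset.card m') m'.sup) :
    x = x' := by
  have hsupm : m.sup ∈ m := multiset_sup_mem m hm0
  have hsupc : ∀ (mm : Multiset ℕ), mm ≠ 0 →
      (mm + Multiset.replicate (d - Multiset.card mm) mm.sup).sup = mm.sup := by
    intro mm hmm0
    apply le_antisymm
    · rw [Multiset.sup_le]
      intro b hb
      rcases Multiset.mem_add.mp hb with h | h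
      · exact Multiset.le_sup h
      · rw [Multiset.eq_of_mem_replicate h]
    · exact Multiset.le_sup (Multiset.mem_add.mpr (Or.inl (multiset_sup_mem mm hmm0)))
  have hg : m.sup = m'.sup := by
    rw [← hsupc m hm0, ← hsupc m' hm0', hcc]
  have hgG : m.sup ∈ minGens (S : Set ℕ) := hmG m.sup hsupm
  have hg0 : m.sup ≠ 0 := hgG.2.1
  have hgS : m.sup ∈ S := hgG.1
  have hcount : ∀ a : ℕ, Multiset.count a m + (if m.sup = a then d - Multiset.card m else 0)
      = Multiset.count a m' + (if m.sup = a then d - Multiset.card m' else 0) := by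
    intro a
    have h := congrArg (Multiset.count a) hcc
    rwa [Multiset.count_add, Multiset.count_add, Multiset.count_replicate,
      Multiset.count_replicate, ← hg] at h
  rcases le_total (Multiset.count m.sup m) (Multiset.count m.sup m') with hcle | hcle
  · have hrep : m' = m
        + Multiset.replicate (Multiset.count m.sup m' - Multiset.count m.sup m) m.sup := by
      ext a
      rw [Multiset.count_add, Multiset.count_replicate]
      have h := hcount a
      by_cases hag : m.sup = a
      · subst hag
        rw [if_pos rfl] at h ⊢
        omega
      · simp only [if_neg hag] at h ⊢
        omega
    have hsum : d * x' = d * x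
        + (Multiset.count m.sup m' - Multiset.count m.sup m) * m.sup := by
      have h := congrArg Multiset.sum hrep
      rwa [Multiset.sum_add, Multiset.sum_replicate, smul_eq_mul, hms, hms'] at h
    rcases eq_or_ne (Multiset.count m.sup m' - Multiset.count m.sup m) 0 with ht | ht
    · rw [ht, Nat.zero_mul, Nat.add_zero] at hsum
      exact (Nat.eq_of_mul_eq_mul_left hd hsum).symm
    · exact absurd (not_irred_of_add S d x x' _ m.sup hd hx.1 hx.2.1 hgS hg0 ht hsum hx') id
  · have hrep : m = m'
        + Multiset.replicate (Multiset.count m.sup m - Multiset.count m.sup m') m.sup := by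
      ext a
      rw [Multiset.count_add, Multiset.count_replicate]
      have h := hcount a
      by_cases hag : m.sup = a
      · subst hag
        rw [if_pos rfl] at h ⊢
        omega
      · simp only [if_neg hag] at h ⊢
        omega
    have hsum : d * x = d * x'
        + (Multiset.count m.sup m - Multiset.count m.sup m') * m.sup := by
      have h := congrArg Multiset.sum hrep
      rwa [Multiset.sum_add, Multiset.sum_replicate, smul_eq_mul, hms, hms'] at h
    rcases eq_or_ne (Multiset.count m.sup m - Multiset.count m.sup m') 0 with ht | ht
    · rw [ht, Nat.zero_mul, Nat.add_zero] at hsum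
      exact Nat.eq_of_mul_eq_mul_left hd hsum
    · exact absurd (not_irred_of_add S d x' x _ m.sup hd hx'.1 hx'.2.1 hgS hg0 ht hsum hx) id

lemma minGens_finite (S : AddSubmonoid ℕ) (hfin : {n : ℕ | n ∉ S}.Finite) :
    (minGens (S : Set ℕ)).Finite := by
  obtain ⟨N, hN⟩ := hfin.bddAbove
  have hS : ∀ n : ℕ, N < n → n ∈ S := by
    intro n hn
    by_contra h
    exact absurd (hN (by simpa using h)) (by omega)
  apply Set.Finite.subset (Set.finite_Iio (2 * N + 3))
  intro x hx
  by_contra hxn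
  simp only [Set.mem_Iio, not_lt] at hxn
  obtain ⟨hxS, hx0, hirr⟩ := hx
  exact hirr (N + 1) (x - (N + 1)) (by simpa using hS (N+1) (by omega))
    (by simpa using hS (x - (N+1)) (by omega)) (by omega) (by omega) (by omega)

lemma map_val_pmap_mk {p : ℕ → Prop} (s : Multiset ℕ) (H : ∀ a ∈ s, p a) :
    (s.pmap (fun a ha => (⟨a, ha⟩ : {x // p x})) H).map Subtype.val = s := by
  rw [Multiset.map_pmap]
  exact Multiset.pmap_eq_map _ _ _ _ ▸ (Multiset.map_id' s)

theorem stmt14 (S : AddSubmonoid ℕ) (hfin : {n : ℕ | n ∉ S}.Finite)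
    (d : ℕ) (hd : 0 < d) :
    Set.ncard (minGens {x : ℕ | d * x ∈ S})
      ≤ Nat.choose (Set.ncard (minGens (S : Set ℕ)) + d - 1) d := by
  classical
  set T : Set ℕ := {x : ℕ | d * x ∈ S} with hT
  have hGfin : (minGens (S : Set ℕ)).Finite := minGens_finite S hfin
  set Gfin : Finset ℕ := hGfin.toFinset with hGf
  -- a junk element of Gfin
  have hGne : Gfin.Nonempty := by
    obtain ⟨N, hN⟩ := hfin.bddAbove
    have hNS : (N + 1 : ℕ) ∈ S := by
      by_contra h
      exact absurd (hN (by simpa using h)) (by omega)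
    obtain ⟨m, hmG, hms⟩ := exists_multiset_minGens (S : Set ℕ) (N + 1) hNS
    have hm0 : m ≠ 0 := by intro h; rw [h] at hms; simp at hms
    obtain ⟨g, hg⟩ := Multiset.exists_mem_of_ne_zero hm0
    exact ⟨g, hGfin.mem_toFinset.mpr (hmG g hg)⟩
  obtain ⟨g₀, hg₀⟩ := hGne
  -- choose factorizations
  have hch : ∀ x ∈ minGens T, ∃ m : Multiset ℕ, (∀ g ∈ m, g ∈ minGens (S : Set ℕ)) ∧
      m ≠ 0 ∧ Multiset.card m ≤ d ∧ m.sum = d * x := fun x hx => key S d hd x hx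
  choose! msel h1 h2 h3 h4 using hch
  set cfun : ℕ → Multiset ℕ :=
    fun x => msel x + Multiset.replicate (d - Multiset.card (msel x)) (msel x).sup with hcfun
  have hcmem : ∀ x ∈ minGens T, ∀ a ∈ cfun x, a ∈ Gfin := by
    intro x hx a ha
    rcases Multiset.mem_add.mp ha with h | h
    · exact hGfin.mem_toFinset.mpr (h1 x hx a h)
    · rw [Multiset.eq_of_mem_replicate h]
      exact hGfin.mem_toFinset.mpr (h1 x hx _ (multiset_sup_mem _ (h2 x hx)))
  have hccard : ∀ x ∈ minGens T, Multiset.card (cfun x) = d := by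
    intro x hx
    rw [hcfun]
    simp only [Multiset.card_add, Multiset.card_replicate]
    have := h3 x hx
    omega
  set f : ℕ → Sym ↥Gfin d := fun x =>
    if h : (∀ a ∈ cfun x, a ∈ Gfin) ∧ Multiset.card (cfun x) = d then
      ⟨(cfun x).pmap (fun a ha => (⟨a, ha⟩ : ↥Gfin)) h.1, by
        rw [Multiset.card_pmap]; exact h.2⟩
    else Sym.replicate d ⟨g₀, hg₀⟩ with hf
  have hfval : ∀ x ∈ minGens T,
      ((f x : Sym ↥Gfin d) : Multiset ↥Gfin).map Subtype.val = cfun x := by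
    intro x hx
    have hxh : (∀ a ∈ cfun x, a ∈ Gfin) ∧ Multiset.card (cfun x) = d :=
      ⟨hcmem x hx, hccard x hx⟩
    have hfx : f x = ⟨(cfun x).pmap (fun a ha => (⟨a, ha⟩ : ↥Gfin)) hxh.1, by
        rw [Multiset.card_pmap]; exact hxh.2⟩ := by
      rw [hf]; exact dif_pos hxh
    rw [hfx]
    exact map_val_pmap_mk _ _
  have hinj : Set.InjOn f (minGens T) := by
    intro x hx x' hx' hfeq
    have hcc : cfun x = cfun x' := by
      rw [← hfval x hx, ← hfval x' hx', hfeq]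
    exact inj_core S d hd x x' hx hx' (msel x) (msel x') (h1 x hx) (h2 x hx) (h4 x hx)
      (h1 x' hx') (h2 x' hx') (h4 x' hx') hcc
  have hcount := Set.ncard_le_ncard_of_injOn f (fun a _ => Set.mem_univ (f a)) hinj
    (Set.finite_univ)
  calc Set.ncard (minGens T) ≤ (Set.univ : Set (Sym ↥Gfin d)).ncard := hcount
    _ = Fintype.card (Sym ↥Gfin d) := by rw [Set.ncard_univ, Nat.card_eq_fintype_card]
    _ = (Fintype.card ↥Gfin + d - 1).choose d := Sym.card_sym_eq_choose d
    _ = (Gfin.card + d - 1).choose d := by rw [Fintype.card_coe]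
    _ = ((minGens (S : Set ℕ)).ncard + d - 1).choose d := by
        rw [Set.ncard_eq_toFinset_card _ hGfin]
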